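/- Let a ∈ H be given by a(i,j) = 1 iff j = 0, and for n < ω let b_n ∈ H be given by b_n(i,j) = 1 iff j = n+1. Then for every n < ω, the orbit o(a/{b_0,…,b_n}) is nowhere dense in the orbit o(a/{b_0,…,b_{n−1}}) (with the subspace topology from (H, d_H)), and a is nm-dependent on {b_0,…,b_n} over {b_0,…,b_{n−1}}. -/

import Mathlib

open scoped ENNReal

/-- The weight of a point `(i,j) ∈ ℕ × ℕ`: `2 · 3^{-(i+1)}`. -/
noncomputable def wt (p : ℕ × ℕ) : ℝ≥0∞ := 2 * ((3 : ℝ≥0∞) ^ (p.1 + 1))⁻¹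

/-- `‖S‖ = Σ_{(i,j) ∈ S} 2 · 3^{-(i+1)} ∈ [0,∞]` for `S ⊆ ℕ × ℕ`. -/
noncomputable def nrmS (S : Set (ℕ × ℕ)) : ℝ≥0∞ := ∑' p, S.indicator wt p

lemma nrmS_mono {S T : Set (ℕ × ℕ)} (h : S ⊆ T) : nrmS S ≤ nrmS T :=
  ENNReal.tsum_le_tsum fun p =>
    Set.indicator_le_indicator_of_subset h (fun _ => by simp) p

lemma nrmS_union_le (S T : Set (ℕ × ℕ)) : nrmS (S ∪ T) ≤ nrmS S + nrmS T := by
  rw [nrmS, nrmS, nrmS, ← ENNReal.tsum_add]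
  refine ENNReal.tsum_le_tsum fun p => ?_
  by_cases hS : p ∈ S
  · refine le_trans ?_ (le_add_right le_rfl)
    rw [Set.indicator_of_mem (Set.mem_union_left _ hS), Set.indicator_of_mem hS]
  · by_cases hT : p ∈ T
    · refine le_trans ?_ (le_add_left le_rfl)
      rw [Set.indicator_of_mem (Set.mem_union_right _ hT), Set.indicator_of_mem hT]
    · rw [Set.indicator_of_notMem (fun hc => hc.elim hS hT)]
      exact zero_le

lemma nrmS_empty : nrmS ∅ = 0 := by simp [nrmS]

/-- The support of `z : ℕ × ℕ → ZMod 2`. -/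
def suppZ (z : ℕ × ℕ → ZMod 2) : Set (ℕ × ℕ) := {p | z p = 1}

/-- `‖z‖` for `z : ℕ × ℕ → ZMod 2`. -/
noncomputable def nrmZ (z : ℕ × ℕ → ZMod 2) : ℝ≥0∞ := nrmS (suppZ z)

/-- `H = {z : ℕ × ℕ → ZMod 2 | ‖z‖ < ∞}`, as an (additive) subgroup of the product group
`ℕ × ℕ → ZMod 2` with pointwise addition mod 2. -/
noncomputable def Hgrp : AddSubgroup ((ℕ × ℕ) → ZMod 2) where
  carrier := {z | nrmZ z < ⊤}
  zero_mem' := by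
    have h : suppZ 0 = ∅ := by ext p; simp [suppZ]
    simp [nrmZ, h, nrmS_empty]
  add_mem' {z w} hz hw := by
    have hsub : suppZ (z + w) ⊆ suppZ z ∪ suppZ w := by
      intro p hp
      by_contra hc
      simp only [Set.mem_union, suppZ, Set.mem_setOf_eq, not_or] at hc
      have hdi : ∀ x : ZMod 2, x = 0 ∨ x = 1 := by decide
      have hz0 : z p = 0 := (hdi (z p)).resolve_right hc.1
      have hw0 : w p = 0 := (hdi (w p)).resolve_right hc.2
      have hp' : (z + w) p = 1 := hp
      rw [Pi.add_apply, hz0, hw0] at hp'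
      exact absurd hp' (by decide)
    calc nrmZ (z + w) ≤ nrmS (suppZ z ∪ suppZ w) := nrmS_mono hsub
      _ ≤ nrmZ z + nrmZ w := nrmS_union_le _ _
      _ < ⊤ := ENNReal.add_lt_top.2 ⟨hz, hw⟩
  neg_mem' {z} hz := by
    have h : suppZ (-z) = suppZ z := by
      ext p; simp [suppZ, CharTwo.neg_eq]
    simpa [nrmZ, h] using hz
/-- `φ(x) = Σ_i 2 · x i · 3^{-(i+1)}`, the standard map from `2^ℕ` onto the ternary Cantor
set (values of `x` read as `0, 1` in `ℝ`). -/
noncomputable def phiC (x : ℕ → ZMod 2) : ℝ :=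
  ∑' i, 2 * ((x i).val : ℝ) * ((3 : ℝ) ^ (i + 1))⁻¹

/-- The metric on `H`: `d_H(z,w) = Σ_j |φ(z(·,j)) − φ(w(·,j))|`, the `ℓ¹`-distance between
the corresponding points of `C^ℕ ∩ ℓ¹`. -/
noncomputable def dH (z w : ↥Hgrp) : ℝ :=
  ∑' j, |phiC (fun i => (z : (ℕ × ℕ) → ZMod 2) (i, j)) -
          phiC (fun i => (w : (ℕ × ℕ) → ZMod 2) (i, j))|

/-- The support of a permutation `g` of `ℕ × ℕ`. -/
def suppP (g : Equiv.Perm (ℕ × ℕ)) : Set (ℕ × ℕ) := {p | g p ≠ p}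

lemma suppP_inv (g : Equiv.Perm (ℕ × ℕ)) : suppP g⁻¹ = suppP g := by
  ext p
  simp only [suppP, Set.mem_setOf_eq, ne_eq]
  constructor
  · intro h hc
    exact h (by conv_lhs => rw [← hc]; simp ; )
  · intro h hc
    exact h (by conv_lhs => rw [← hc]; simp)

theorem Equiv.Perm.inv_apply_self {α : Type*} (f : Equiv.Perm α) (x : α) : f⁻¹ (f x) = x :=
  Equiv.symm_apply_apply f x

theorem Equiv.Perm.apply_inv_self {α : Type*} (f : Equiv.Perm α) (x : α) : f (f⁻¹ x) = x :=
  Equiv.apply_symm_apply f x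

/-- `G = {g ∈ Sym(ℕ × ℕ) | ‖supp g‖ < ∞}`, as a subgroup of the symmetric group of
`ℕ × ℕ`. -/
noncomputable def Ggrp : Subgroup (Equiv.Perm (ℕ × ℕ)) where
  carrier := {g | nrmS (suppP g) < ⊤}
  one_mem' := by
    have h : suppP 1 = ∅ := by ext p; simp [suppP]
    simp [h, nrmS_empty]
  mul_mem' {f g} hf hg := by
    have hsub : suppP (f * g) ⊆ suppP f ∪ suppP g := by
      intro p hp
      by_contra hc
      simp only [Set.mem_union, suppP, Set.mem_setOf_eq, ne_eq, not_or, not_not] at hc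
      exact hp (by simp only [suppP, Set.mem_setOf_eq, Equiv.Perm.mul_apply, hc.2, hc.1] at *)
    calc nrmS (suppP (f * g)) ≤ nrmS (suppP f ∪ suppP g) := nrmS_mono hsub
      _ ≤ nrmS (suppP f) + nrmS (suppP g) := nrmS_union_le _ _
      _ < ⊤ := ENNReal.add_lt_top.2 ⟨hf, hg⟩
  inv_mem' {g} hg := by simpa [suppP_inv] using hg

/-- The metric on `G`: `d(f,g) = ‖supp (f⁻¹ ∘ g)‖`. -/
noncomputable def dG (f g : ↥Ggrp) : ℝ :=
  (nrmS (suppP ((f : Equiv.Perm (ℕ × ℕ))⁻¹ * (g : Equiv.Perm (ℕ × ℕ))))).toReal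

/-- The action of `G` on `H`: `g • h = h ∘ g⁻¹`. -/
noncomputable def actGH (g : ↥Ggrp) (h : ↥Hgrp) : ↥Hgrp :=
  ⟨fun p => (h : (ℕ × ℕ) → ZMod 2) (((g : Equiv.Perm (ℕ × ℕ)))⁻¹ p), by
    have hsub : suppZ (fun p => (h : (ℕ × ℕ) → ZMod 2) (((g : Equiv.Perm (ℕ × ℕ)))⁻¹ p)) ⊆
        suppZ (h : (ℕ × ℕ) → ZMod 2) ∪ suppP (g : Equiv.Perm (ℕ × ℕ)) := by
      intro p hp
      by_cases hgp : ((g : Equiv.Perm (ℕ × ℕ)))⁻¹ p = p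
      · left
        have : (h : (ℕ × ℕ) → ZMod 2) (((g : Equiv.Perm (ℕ × ℕ)))⁻¹ p) = 1 := hp
        rwa [hgp] at this
      · right
        have : p ∈ suppP ((g : Equiv.Perm (ℕ × ℕ)))⁻¹ := hgp
        rwa [suppP_inv] at this
    show nrmZ _ < ⊤
    calc nrmZ _ ≤ nrmS (suppZ (h : (ℕ × ℕ) → ZMod 2) ∪ suppP (g : Equiv.Perm (ℕ × ℕ))) :=
          nrmS_mono hsub
      _ ≤ nrmZ (h : (ℕ × ℕ) → ZMod 2) + nrmS (suppP (g : Equiv.Perm (ℕ × ℕ))) :=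
          nrmS_union_le _ _
      _ < ⊤ := ENNReal.add_lt_top.2 ⟨h.2, g.2⟩⟩
def colEquiv (c : ℕ) : ℕ ≃ {p : ℕ × ℕ | p.2 = c} where
  toFun := fun i => ⟨(i, c), rfl⟩
  invFun := fun p => p.1.1
  left_inv := fun _ => rfl
  right_inv := fun p => Subtype.ext (Prod.ext rfl p.2.symm)

lemma nrmS_column_lt_top (c : ℕ) : nrmS {p : ℕ × ℕ | p.2 = c} < ⊤ := by
  set e := colEquiv c with he
  have h0 : nrmS {p : ℕ × ℕ | p.2 = c} = ∑' i : ℕ, wt ((e i : ℕ × ℕ)) := by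
    rw [nrmS, ← tsum_subtype]
    exact (Equiv.tsum_eq e fun p => wt (p : ℕ × ℕ)).symm
  have h1 : nrmS {p : ℕ × ℕ | p.2 = c} = ∑' i : ℕ, wt (i, c) := h0
  rw [h1]
  have h2 : ∀ i : ℕ, wt (i, c) = ((3 : ℝ≥0∞)⁻¹) ^ i * (2 * 3⁻¹) := by
    intro i
    rw [wt, pow_succ, ENNReal.mul_inv (Or.inr (by norm_num)) (Or.inr (by norm_num)),
      ← ENNReal.inv_pow]
    ring
  simp_rw [h2]
  rw [ENNReal.tsum_mul_right, ENNReal.tsum_geometric]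
  refine ENNReal.mul_lt_top ?_ ?_
  · rw [lt_top_iff_ne_top]
    refine ENNReal.inv_ne_top.2 ?_
    rw [ne_eq, tsub_eq_zero_iff_le, not_le]
    exact ENNReal.inv_lt_one.2 (by norm_num)
  · exact ENNReal.mul_lt_top (by norm_num) (by simp [ENNReal.inv_lt_top])

/-- The topology on `G` induced by the metric `d`: the topology generated by the open balls
of `d`. -/
noncomputable def tG : TopologicalSpace ↥Ggrp :=
  TopologicalSpace.generateFrom
    {s | ∃ (f : ↥Ggrp) (ε : ℝ), 0 < ε ∧ s = {g : ↥Ggrp | dG f g < ε}}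

/-- The topology on `H` induced by the metric `d_H`: the topology generated by the open
balls of `d_H`. -/
noncomputable def tH : TopologicalSpace ↥Hgrp :=
  TopologicalSpace.generateFrom
    {s | ∃ (z : ↥Hgrp) (ε : ℝ), 0 < ε ∧ s = {w : ↥Hgrp | dH z w < ε}}

/-- The element `a ∈ H` given by `a (i,j) = 1` iff `j = 0`. -/
noncomputable def aElt : ↥Hgrp :=
  ⟨fun p => if p.2 = 0 then 1 else 0, by
    show nrmZ _ < ⊤
    refine lt_of_le_of_lt (nrmS_mono ?_) (nrmS_column_lt_top 0)
    intro p hp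
    by_contra hc
    simp only [suppZ, Set.mem_setOf_eq] at hp
    rw [if_neg (show ¬ p.2 = 0 from hc)] at hp
    exact absurd hp (by decide)⟩

/-- The element `b_n ∈ H` given by `b_n (i,j) = 1` iff `j = n + 1`. -/
noncomputable def bElt (n : ℕ) : ↥Hgrp :=
  ⟨fun p => if p.2 = n + 1 then 1 else 0, by
    show nrmZ _ < ⊤
    refine lt_of_le_of_lt (nrmS_mono ?_) (nrmS_column_lt_top (n + 1))
    intro p hp
    by_contra hc
    simp only [suppZ, Set.mem_setOf_eq] at hp
    rw [if_neg (show ¬ p.2 = n + 1 from hc)] at hp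
    exact absurd hp (by decide)⟩

/-- The set `{b_0, …, b_{n-1}} ⊆ H`. -/
noncomputable def bSet (n : ℕ) : Set ↥Hgrp := {x | ∃ k < n, x = bElt k}

lemma actGH_one (h : ↥Hgrp) : actGH 1 h = h := by
  apply Subtype.ext
  funext p
  show (h : (ℕ × ℕ) → ZMod 2) (((1 : Equiv.Perm (ℕ × ℕ)))⁻¹ p) = _
  simp

lemma actGH_mul (g₁ g₂ : ↥Ggrp) (h : ↥Hgrp) :
    actGH (g₁ * g₂) h = actGH g₁ (actGH g₂ h) := by
  apply Subtype.ext
  funext p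
  show (h : (ℕ × ℕ) → ZMod 2) (((g₁ : Equiv.Perm (ℕ × ℕ)) * (g₂ : Equiv.Perm (ℕ × ℕ)))⁻¹ p)
      = (h : (ℕ × ℕ) → ZMod 2) ((g₂ : Equiv.Perm (ℕ × ℕ))⁻¹ ((g₁ : Equiv.Perm (ℕ × ℕ))⁻¹ p))
  rw [mul_inv_rev, Equiv.Perm.mul_apply]

/-- The pointwise stabilizer `G_C ≤ G` of a set `C ⊆ H`. -/
noncomputable def fixH (C : Set ↥Hgrp) : Subgroup ↥Ggrp where
  carrier := {g | ∀ c ∈ C, actGH g c = c}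
  one_mem' := fun c _ => actGH_one c
  mul_mem' {g₁ g₂} h₁ h₂ := fun c hc => by rw [actGH_mul, h₂ c hc, h₁ c hc]
  inv_mem' {g} hg := fun c hc => by
    conv_lhs => rw [← hg c hc]
    rw [← actGH_mul, inv_mul_cancel, actGH_one]

/-- The orbit `o(a/C)` of `a ∈ H` under the pointwise stabilizer `G_C`. -/
noncomputable def orbitOverH (C : Set ↥Hgrp) (a : ↥Hgrp) : Set ↥Hgrp :=
  {x | ∃ g ∈ fixH C, actGH g a = x}

/-- `a ⫝_A B` in `(H,G)`: the set of those `g ∈ G_A` with `g • a ∈ o(a/A ∪ B)` is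
non-meager in `G_A` (with the subspace topology from the metric topology of `G`). -/
noncomputable def NMIndepH (a : ↥Hgrp) (A B : Set ↥Hgrp) : Prop :=
  ¬ @IsMeagre ↥(fixH A) (@instTopologicalSpaceSubtype ↥Ggrp _ tG)
      {g : ↥(fixH A) | actGH (g : ↥Ggrp) a ∈ orbitOverH (A ∪ B) a}

section AuxBasic
open Set

lemma zmod2_em (x : ZMod 2) : x = 0 ∨ x = 1 := by revert x; decide

lemma zmod2_one_ne_zero : (1 : ZMod 2) ≠ 0 := by decide

lemma wt_ne_top (p : ℕ × ℕ) : wt p ≠ ⊤ := by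
  rw [wt]
  exact ENNReal.mul_ne_top (by norm_num)
    (ENNReal.inv_ne_top.2 (by positivity))

lemma wt_pos (p : ℕ × ℕ) : 0 < wt p := by
  rw [wt]
  refine ENNReal.mul_pos (by norm_num) ?_
  exact ENNReal.inv_ne_zero.2 (ENNReal.pow_ne_top (by norm_num))

lemma wt_toReal (p : ℕ × ℕ) : (wt p).toReal = 2 * (((3:ℝ) ^ (p.1 + 1))⁻¹) := by
  rw [wt, ENNReal.toReal_mul, ENNReal.toReal_inv, ENNReal.toReal_pow]
  norm_num

lemma wt_toReal_pos (p : ℕ × ℕ) : 0 < (wt p).toReal :=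
  ENNReal.toReal_pos (wt_pos p).ne' (wt_ne_top p)

lemma nrmS_singleton (p : ℕ × ℕ) : nrmS {p} = wt p := by
  rw [nrmS]
  rw [tsum_eq_single p]
  · simp
  · intro q hq; simp [Set.indicator_of_notMem, hq]

lemma wt_le_nrmS {p : ℕ × ℕ} {S : Set (ℕ × ℕ)} (hp : p ∈ S) : wt p ≤ nrmS S := by
  have h := ENNReal.le_tsum (f := S.indicator wt) p
  rwa [Set.indicator_of_mem hp] at h

lemma nrmS_pair_le (p q : ℕ × ℕ) : nrmS {p, q} ≤ wt p + wt q := by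
  have : ({p, q} : Set (ℕ × ℕ)) = {p} ∪ {q} := rfl
  rw [this]
  refine le_trans (nrmS_union_le _ _) ?_
  rw [nrmS_singleton, nrmS_singleton]

lemma nrmS_eq_top_of_infinite_of_le {S : Set (ℕ × ℕ)} {δ : ℝ≥0∞} (hδ : δ ≠ 0)
    (hinf : S.Infinite) (h : ∀ p ∈ S, δ ≤ wt p) : nrmS S = ⊤ := by
  have hle : ∑' p, S.indicator (fun _ => δ) p ≤ nrmS S := by
    refine ENNReal.tsum_le_tsum fun p => ?_
    by_cases hp : p ∈ S
    · rw [Set.indicator_of_mem hp, Set.indicator_of_mem hp]; exact h p hp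
    · rw [Set.indicator_of_notMem hp]; exact zero_le
  rw [← tsum_subtype] at hle
  have := hinf.to_subtype
  rw [ENNReal.tsum_const_eq_top_of_ne_zero hδ] at hle
  exact top_le_iff.mp hle

end AuxBasic
section AuxG
open Set

lemma suppP_mul_inv (f g : Equiv.Perm (ℕ × ℕ)) :
    suppP (f⁻¹ * g) = {p | f p ≠ g p} := by
  ext p
  simp only [suppP, Set.mem_setOf_eq, Equiv.Perm.mul_apply, ne_eq]
  constructor
  · intro h hc
    exact h (by rw [← hc, Equiv.Perm.inv_apply_self])
  · intro h hc
    apply h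
    have := congrArg f hc
    rwa [Equiv.Perm.apply_inv_self, eq_comm] at this

lemma nrm_dG_ne_top (f g : ↥Ggrp) :
    nrmS (suppP ((f : Equiv.Perm (ℕ × ℕ))⁻¹ * (g : Equiv.Perm (ℕ × ℕ)))) ≠ ⊤ := by
  have h := (f⁻¹ * g : ↥Ggrp).2
  have e : ((f⁻¹ * g : ↥Ggrp) : Equiv.Perm (ℕ × ℕ))
      = (f : Equiv.Perm (ℕ × ℕ))⁻¹ * (g : Equiv.Perm (ℕ × ℕ)) := rfl
  rw [e] at h
  exact h.ne

lemma dG_self (g : ↥Ggrp) : dG g g = 0 := by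
  rw [dG, inv_mul_cancel]
  have : suppP (1 : Equiv.Perm (ℕ × ℕ)) = ∅ := by ext p; simp [suppP]
  rw [this, nrmS_empty]
  rfl

lemma dG_nonneg (f g : ↥Ggrp) : 0 ≤ dG f g := ENNReal.toReal_nonneg

lemma dG_triangle (f g h : ↥Ggrp) : dG f h ≤ dG f g + dG g h := by
  rw [dG, dG, dG, ← ENNReal.toReal_add (nrm_dG_ne_top f g) (nrm_dG_ne_top g h)]
  rw [ENNReal.toReal_le_toReal (nrm_dG_ne_top f h)
    (ENNReal.add_ne_top.2 ⟨nrm_dG_ne_top f g, nrm_dG_ne_top g h⟩)]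
  refine le_trans (nrmS_mono ?_) (nrmS_union_le _ _)
  intro p hp
  rw [suppP_mul_inv] at hp ⊢
  rw [Set.mem_union, suppP_mul_inv]
  by_cases hc : (f : Equiv.Perm (ℕ × ℕ)) p = (g : Equiv.Perm (ℕ × ℕ)) p
  · right; simpa [Set.mem_setOf_eq, ← hc] using hp
  · left; exact hc

lemma apply_eq_of_dG_lt {f g : ↥Ggrp} {p : ℕ × ℕ}
    (h : dG f g < (wt p).toReal) :
    (f : Equiv.Perm (ℕ × ℕ)) p = (g : Equiv.Perm (ℕ × ℕ)) p := by
  by_contra hc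
  have hmem : p ∈ suppP ((f : Equiv.Perm (ℕ × ℕ))⁻¹ * (g : Equiv.Perm (ℕ × ℕ))) := by
    rw [suppP_mul_inv]; exact hc
  have hle : wt p ≤ nrmS (suppP ((f : Equiv.Perm (ℕ × ℕ))⁻¹ * (g : Equiv.Perm (ℕ × ℕ)))) :=
    wt_le_nrmS hmem
  have := ENNReal.toReal_le_toReal (wt_ne_top p) (nrm_dG_ne_top f g) |>.2 hle
  rw [dG] at h
  linarith

end AuxG

section AuxTop

variable {α : Type*} (d : α → α → ℝ)

/-- The family of open balls of an abstract distance function. -/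
def ballsOf : Set (Set α) := {s | ∃ z ε, 0 < ε ∧ s = {w | d z w < ε}}

lemma exists_ball_subset (htri : ∀ x y z, d x z ≤ d x y + d y z)
    {U : Set α} (hU : TopologicalSpace.GenerateOpen (ballsOf d) U) :
    ∀ x ∈ U, ∃ ε > 0, {y | d x y < ε} ⊆ U := by
  induction hU with
  | basic s hs =>
    intro x hx
    obtain ⟨z, ε, hε, rfl⟩ := hs
    refine ⟨ε - d z x, by simpa using hx, fun y hy => ?_⟩
    simp only [Set.mem_setOf_eq] at hx hy ⊢
    have := htri z x y
    linarith
  | univ => intro x _; exact ⟨1, one_pos, fun y _ => trivial⟩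
  | inter s t _ _ ihs iht =>
    intro x hx
    obtain ⟨εs, hεs, hs⟩ := ihs x hx.1
    obtain ⟨εt, hεt, ht⟩ := iht x hx.2
    refine ⟨min εs εt, lt_min hεs hεt, fun y hy => ?_⟩
    simp only [Set.mem_setOf_eq, lt_min_iff] at hy
    exact ⟨hs hy.1, ht hy.2⟩
  | sUnion S _ ih =>
    intro x hx
    obtain ⟨s, hsS, hxs⟩ := hx
    obtain ⟨ε, hε, hsub⟩ := ih s hsS x hxs
    exact ⟨ε, hε, fun y hy => ⟨s, hsS, hsub hy⟩⟩

lemma isOpen_of_forall_ball (hself : ∀ x, d x x = 0) {V : Set α}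
    (h : ∀ x ∈ V, ∃ ε > 0, {y | d x y < ε} ⊆ V) :
    TopologicalSpace.GenerateOpen (ballsOf d) V := by
  have hV : V = ⋃₀ {s | s ∈ ballsOf d ∧ s ⊆ V} := by
    apply Set.Subset.antisymm
    · intro x hx
      obtain ⟨ε, hε, hsub⟩ := h x hx
      exact ⟨{y | d x y < ε}, ⟨⟨x, ε, hε, rfl⟩, hsub⟩, by simp [hself x, hε]⟩
    · intro x ⟨s, ⟨_, hsub⟩, hxs⟩
      exact hsub hxs
  rw [hV]
  exact TopologicalSpace.GenerateOpen.sUnion _ fun s hs =>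
    TopologicalSpace.GenerateOpen.basic s hs.1

end AuxTop
section AuxH
open Set

lemma zmod2_val_le_one (u : ZMod 2) : ((u.val : ℝ)) ≤ 1 := by
  rcases zmod2_em u with h | h <;> subst h <;> norm_num [ZMod.val_one]

lemma zmod2_val_nonneg (u : ZMod 2) : (0:ℝ) ≤ (u.val : ℝ) := Nat.cast_nonneg _

lemma zmod2_val_dist {u v : ZMod 2} (h : u ≠ v) : |((u.val : ℝ)) - (v.val : ℝ)| = 1 := by
  rcases zmod2_em u with hu | hu <;> rcases zmod2_em v with hv | hv <;> subst hu <;> subst hv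
  · exact absurd rfl h
  · norm_num [ZMod.val_one]
  · norm_num [ZMod.val_one]
  · exact absurd rfl h

lemma summable_geom3 (m : ℕ) :
    Summable (fun i : ℕ => 2 * (((3:ℝ) ^ (i + m + 1))⁻¹)) := by
  have hgeo : Summable (fun i : ℕ => ((3:ℝ)⁻¹) ^ i) :=
    summable_geometric_of_lt_one (by norm_num) (by norm_num)
  have h := hgeo.mul_right (2 * (((3:ℝ) ^ (m + 1))⁻¹))
  refine h.congr fun i => ?_
  rw [show i + m + 1 = i + (m + 1) by omega, pow_add, mul_inv, inv_pow]
  ring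

lemma tsum_geom3 (m : ℕ) :
    ∑' i : ℕ, 2 * (((3:ℝ) ^ (i + m + 1))⁻¹) = ((3:ℝ) ^ m)⁻¹ := by
  have hrw : ∀ i : ℕ, 2 * (((3:ℝ) ^ (i + m + 1))⁻¹)
      = ((3:ℝ)⁻¹) ^ i * (2 * (((3:ℝ) ^ (m + 1))⁻¹)) := by
    intro i
    rw [show i + m + 1 = i + (m + 1) by omega, pow_add, mul_inv, inv_pow]
    ring
  rw [tsum_congr hrw, tsum_mul_right, tsum_geometric_of_lt_one (by norm_num) (by norm_num)]
  have h3 : ((3:ℝ) ^ (m + 1)) = 3 * (3:ℝ) ^ m := by rw [pow_succ]; ring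
  rw [h3]
  have hm : ((3:ℝ) ^ m) ≠ 0 := by positivity
  field_simp
  ring

lemma summable_phiC_term (x : ℕ → ZMod 2) :
    Summable (fun i : ℕ => 2 * (((x i).val : ℝ)) * (((3:ℝ) ^ (i + 1))⁻¹)) := by
  refine Summable.of_nonneg_of_le (fun i => by positivity)
    (fun i => ?_) (by simpa using summable_geom3 0)
  have h1 := zmod2_val_le_one (x i)
  have h2 : (0:ℝ) ≤ ((3:ℝ) ^ (i + 1))⁻¹ := by positivity
  have := zmod2_val_nonneg (x i)
  nlinarith

lemma phiC_nonneg (x : ℕ → ZMod 2) : 0 ≤ phiC x :=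
  tsum_nonneg fun i => by positivity

lemma indicator_suppZ_eq (z : (ℕ × ℕ) → ZMod 2) (p : ℕ × ℕ) :
    (suppZ z).indicator wt p
      = 2 * (((z p).val : ℝ≥0∞)) * (((3:ℝ≥0∞) ^ (p.1 + 1))⁻¹) := by
  rcases zmod2_em (z p) with h | h
  · rw [Set.indicator_of_notMem (by simp [suppZ, h, zmod2_one_ne_zero.symm] : p ∉ suppZ z)]
    rw [h]
    norm_num [ZMod.val]
  · rw [Set.indicator_of_mem (show p ∈ suppZ z from h), wt, h]
    norm_num [ZMod.val_one]

/-- The `ℝ≥0∞`-valued norm of the `j`-th column of `z`. -/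
noncomputable def ennCol (z : ↥Hgrp) (j : ℕ) : ℝ≥0∞ :=
  ∑' i : ℕ, (suppZ (z : (ℕ × ℕ) → ZMod 2)).indicator wt (i, j)

lemma tsum_ennCol (z : ↥Hgrp) : ∑' j : ℕ, ennCol z j = nrmZ (z : (ℕ × ℕ) → ZMod 2) := by
  rw [nrmZ, nrmS]
  have h := Equiv.tsum_eq (Equiv.prodComm ℕ ℕ)
    (fun p => (suppZ (z : (ℕ × ℕ) → ZMod 2)).indicator wt p)
  rw [← h, ENNReal.tsum_prod']
  rfl

lemma ennCol_ne_top (z : ↥Hgrp) (j : ℕ) : ennCol z j ≠ ⊤ := by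
  have hle : ennCol z j ≤ nrmZ (z : (ℕ × ℕ) → ZMod 2) := by
    rw [← tsum_ennCol]; exact ENNReal.le_tsum j
  exact (lt_of_le_of_lt hle z.2).ne

lemma phiC_col_eq (z : ↥Hgrp) (j : ℕ) :
    phiC (fun i => (z : (ℕ × ℕ) → ZMod 2) (i, j)) = (ennCol z j).toReal := by
  rw [phiC, ennCol, ENNReal.tsum_toReal_eq (fun i => ?fin)]
  case fin =>
    rw [indicator_suppZ_eq]
    exact ENNReal.mul_ne_top
      (ENNReal.mul_ne_top (by norm_num) (ENNReal.natCast_ne_top _))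
      (ENNReal.inv_ne_top.2 (by positivity))
  refine tsum_congr fun i => ?_
  rw [indicator_suppZ_eq]
  rw [ENNReal.toReal_mul, ENNReal.toReal_mul, ENNReal.toReal_inv, ENNReal.toReal_pow]
  norm_num

lemma summable_col (z : ↥Hgrp) :
    Summable (fun j => phiC (fun i => (z : (ℕ × ℕ) → ZMod 2) (i, j))) := by
  have h : (fun j => phiC (fun i => (z : (ℕ × ℕ) → ZMod 2) (i, j)))
      = fun j => (ennCol z j).toReal := funext (phiC_col_eq z)
  rw [h]
  exact ENNReal.summable_toReal (by rw [tsum_ennCol]; exact z.2.ne)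

lemma summable_dH_terms (z w : ↥Hgrp) :
    Summable (fun j => |phiC (fun i => (z : (ℕ × ℕ) → ZMod 2) (i, j))
      - phiC (fun i => (w : (ℕ × ℕ) → ZMod 2) (i, j))|) := by
  refine Summable.of_nonneg_of_le (fun j => abs_nonneg _) (fun j => ?_)
    ((summable_col z).add (summable_col w))
  rw [abs_sub_le_iff]
  constructor
  · have := phiC_nonneg (fun i => (w : (ℕ × ℕ) → ZMod 2) (i, j))
    have := phiC_nonneg (fun i => (z : (ℕ × ℕ) → ZMod 2) (i, j))
    linarith
  · have := phiC_nonneg (fun i => (w : (ℕ × ℕ) → ZMod 2) (i, j))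
    have := phiC_nonneg (fun i => (z : (ℕ × ℕ) → ZMod 2) (i, j))
    linarith

lemma dH_self (z : ↥Hgrp) : dH z z = 0 := by
  rw [dH]
  simp

lemma dH_nonneg (z w : ↥Hgrp) : 0 ≤ dH z w := tsum_nonneg fun j => abs_nonneg _

lemma dH_triangle (u v w : ↥Hgrp) : dH u w ≤ dH u v + dH v w := by
  rw [dH, dH, dH, ← Summable.tsum_add (summable_dH_terms u v) (summable_dH_terms v w)]
  exact Summable.tsum_le_tsum (fun j => abs_sub_le _ _ _) (summable_dH_terms u w)
    ((summable_dH_terms u v).add (summable_dH_terms v w))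

lemma le_dH (z w : ↥Hgrp) (j : ℕ) :
    |phiC (fun i => (z : (ℕ × ℕ) → ZMod 2) (i, j))
      - phiC (fun i => (w : (ℕ × ℕ) → ZMod 2) (i, j))| ≤ dH z w :=
  Summable.le_tsum (summable_dH_terms z w) j fun _ _ => abs_nonneg _

end AuxH
section AuxDigits
open Set

set_option maxHeartbeats 1000000 in
lemma phiC_lower {x y : ℕ → ZMod 2} {k : ℕ} (hmin : ∀ m, m < k → x m = y m)
    (hne : x k ≠ y k) : ((3:ℝ) ^ (k + 1))⁻¹ ≤ |phiC x - phiC y| := by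
  set f : ℕ → ℝ := fun i => 2 * (((x i).val : ℝ)) * (((3:ℝ) ^ (i + 1))⁻¹) with hf_def
  set g : ℕ → ℝ := fun i => 2 * (((y i).val : ℝ)) * (((3:ℝ) ^ (i + 1))⁻¹) with hg_def
  have hf : Summable f := summable_phiC_term x
  have hg : Summable g := summable_phiC_term y
  have hd : Summable (fun i => f i - g i) := hf.sub hg
  have h1 : phiC x - phiC y = ∑' i, (f i - g i) := by
    rw [phiC, phiC, Summable.tsum_sub hf hg]
  have hd' : Summable (fun i => f (i + k) - g (i + k)) := by
    exact (summable_nat_add_iff k).2 hd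
  have h2 : ∑' i, (f i - g i)
      = (∑ i ∈ Finset.range k, (f i - g i)) + ∑' i, (f (i + k) - g (i + k)) :=
    (Summable.sum_add_tsum_nat_add k hd).symm
  have h3 : ∑ i ∈ Finset.range k, (f i - g i) = 0 := by
    refine Finset.sum_eq_zero fun i hi => ?_
    rw [hf_def, hg_def]
    simp only []
    rw [hmin i (Finset.mem_range.mp hi)]
    ring
  have h4 : ∑' i, (f (i + k) - g (i + k))
      = (f k - g k) + ∑' i, (f (i + 1 + k) - g (i + 1 + k)) := by
    rw [Summable.tsum_eq_zero_add hd']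
    simp only [zero_add]
  -- bound the tail
  set T := ∑' i, (f (i + 1 + k) - g (i + 1 + k)) with hT_def
  have htail_s : Summable (fun i => f (i + 1 + k) - g (i + 1 + k)) := by
    have := (summable_nat_add_iff (k + 1)).2 hd
    exact this.congr fun i => by rw [show i + (k + 1) = i + 1 + k by omega]
  have hterm : ∀ i : ℕ, |f (i + 1 + k) - g (i + 1 + k)| ≤ 2 * (((3:ℝ) ^ (i + (k + 1) + 1))⁻¹) := by
    intro i
    have he : i + 1 + k + 1 = i + (k + 1) + 1 := by omega
    rw [hf_def, hg_def]
    simp only [he]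
    set c := ((3:ℝ) ^ (i + (k + 1) + 1))⁻¹ with hc
    have hc0 : (0:ℝ) ≤ c := by positivity
    have h1' := zmod2_val_le_one (x (i + 1 + k))
    have h2' := zmod2_val_le_one (y (i + 1 + k))
    have h3' := zmod2_val_nonneg (x (i + 1 + k))
    have h4' := zmod2_val_nonneg (y (i + 1 + k))
    rw [abs_sub_le_iff]
    constructor <;> nlinarith
  have htail : |T| ≤ ((3:ℝ) ^ (k + 1))⁻¹ := by
    have habs : Summable (fun i => |f (i + 1 + k) - g (i + 1 + k)|) :=
      htail_s.abs
    have h5 : |T| ≤ ∑' i, |f (i + 1 + k) - g (i + 1 + k)| := by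
      rw [hT_def]
      have hn : Summable (fun i => ‖f (i + 1 + k) - g (i + 1 + k)‖) := by
        simpa only [Real.norm_eq_abs] using habs
      simpa only [Real.norm_eq_abs] using norm_tsum_le_tsum_norm hn
    have h6 : ∑' i, |f (i + 1 + k) - g (i + 1 + k)|
        ≤ ∑' i : ℕ, 2 * (((3:ℝ) ^ (i + (k + 1) + 1))⁻¹) :=
      Summable.tsum_le_tsum hterm habs (summable_geom3 (k + 1))
    rw [tsum_geom3 (k + 1)] at h6
    linarith
  have hmain : |f k - g k| = 2 * (((3:ℝ) ^ (k + 1))⁻¹) := by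
    rw [hf_def, hg_def]
    simp only []
    have : 2 * (((x k).val : ℝ)) * (((3:ℝ) ^ (k + 1))⁻¹)
        - 2 * (((y k).val : ℝ)) * (((3:ℝ) ^ (k + 1))⁻¹)
        = (((x k).val : ℝ) - ((y k).val : ℝ)) * (2 * (((3:ℝ) ^ (k + 1))⁻¹)) := by ring
    rw [this, abs_mul, zmod2_val_dist hne, one_mul]
    rw [abs_of_nonneg (by positivity)]
  have habs2 : |f k - g k| ≤ |phiC x - phiC y| + |T| := by
    have he : phiC x - phiC y = (f k - g k) + T := by
      rw [h1, h2, h3, zero_add, h4]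
    have he2 : f k - g k = ((f k - g k) + T) + (-T) := by ring
    calc |f k - g k| = |((f k - g k) + T) + (-T)| := by rw [← he2]
      _ ≤ |(f k - g k) + T| + |(-T)| := abs_add_le _ _
      _ = |phiC x - phiC y| + |T| := by rw [← he, abs_neg]
  rw [hmain] at habs2
  linarith

lemma digits_agree {z w : ↥Hgrp} {j i : ℕ} (h : dH z w < ((3:ℝ) ^ (i + 1))⁻¹) :
    ∀ m, m ≤ i → (z : (ℕ × ℕ) → ZMod 2) (m, j) = (w : (ℕ × ℕ) → ZMod 2) (m, j) := by
  intro m hm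
  by_contra hne
  classical
  set x : ℕ → ZMod 2 := fun i' => (z : (ℕ × ℕ) → ZMod 2) (i', j) with hx
  set y : ℕ → ZMod 2 := fun i' => (w : (ℕ × ℕ) → ZMod 2) (i', j) with hy
  have hcol : |phiC x - phiC y| < ((3:ℝ) ^ (i + 1))⁻¹ := lt_of_le_of_lt (le_dH z w j) h
  have hex : ∃ m', x m' ≠ y m' := ⟨m, hne⟩
  set k := Nat.find hex with hk_def
  have hk : x k ≠ y k := Nat.find_spec hex
  have hkmin : ∀ m', m' < k → x m' = y m' := fun m' hm' =>
    not_not.mp (Nat.find_min hex hm')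
  have hki : k ≤ i := le_trans (Nat.find_min' hex hne) hm
  have hlow := phiC_lower hkmin hk
  have hmono : ((3:ℝ) ^ (i + 1))⁻¹ ≤ ((3:ℝ) ^ (k + 1))⁻¹ := by
    apply inv_anti₀ (by positivity)
    exact pow_le_pow_right₀ (by norm_num) (by omega)
  linarith

lemma dH_flip (z w : ↥Hgrp) (c : ℕ × ℕ)
    (hne : (z : (ℕ × ℕ) → ZMod 2) c ≠ (w : (ℕ × ℕ) → ZMod 2) c)
    (hagree : ∀ p, p ≠ c → (z : (ℕ × ℕ) → ZMod 2) p = (w : (ℕ × ℕ) → ZMod 2) p) :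
    dH z w = 2 * (((3:ℝ) ^ (c.1 + 1))⁻¹) := by
  rw [dH]
  rw [tsum_eq_single c.2 ?hzero]
  case hzero =>
    intro j hj
    have hcols : (fun i => (z : (ℕ × ℕ) → ZMod 2) (i, j))
        = fun i => (w : (ℕ × ℕ) → ZMod 2) (i, j) := by
      funext i
      exact hagree (i, j) (by intro hc; exact hj (congrArg Prod.snd hc))
    rw [hcols, sub_self, abs_zero]
  -- the column c.2
  have hc : c = (c.1, c.2) := rfl
  set x : ℕ → ZMod 2 := fun i => (z : (ℕ × ℕ) → ZMod 2) (i, c.2) with hx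
  set y : ℕ → ZMod 2 := fun i => (w : (ℕ × ℕ) → ZMod 2) (i, c.2) with hy
  have hf : Summable (fun i : ℕ => 2 * (((x i).val : ℝ)) * (((3:ℝ) ^ (i + 1))⁻¹)) :=
    summable_phiC_term x
  have hg : Summable (fun i : ℕ => 2 * (((y i).val : ℝ)) * (((3:ℝ) ^ (i + 1))⁻¹)) :=
    summable_phiC_term y
  have h1 : phiC x - phiC y = ∑' i, (2 * (((x i).val : ℝ)) * (((3:ℝ) ^ (i + 1))⁻¹)
      - 2 * (((y i).val : ℝ)) * (((3:ℝ) ^ (i + 1))⁻¹)) := by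
    rw [phiC, phiC, Summable.tsum_sub hf hg]
  rw [h1, tsum_eq_single c.1 ?hz2]
  case hz2 =>
    intro i hi
    have : x i = y i := hagree (i, c.2) (by
      intro hic
      apply hi
      exact (congrArg Prod.fst hic))
    rw [this]; ring
  have hxy : x c.1 ≠ y c.1 := by
    rw [hx, hy]
    simpa [← hc] using hne
  have : 2 * (((x c.1).val : ℝ)) * (((3:ℝ) ^ (c.1 + 1))⁻¹)
      - 2 * (((y c.1).val : ℝ)) * (((3:ℝ) ^ (c.1 + 1))⁻¹)
      = (((x c.1).val : ℝ) - ((y c.1).val : ℝ)) * (2 * (((3:ℝ) ^ (c.1 + 1))⁻¹)) := by ring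
  rw [this, abs_mul, zmod2_val_dist hxy, one_mul, abs_of_nonneg (by positivity)]

lemma isOpen_digit_one (i c : ℕ) :
    TopologicalSpace.GenerateOpen (ballsOf dH) {w : ↥Hgrp | (w : (ℕ × ℕ) → ZMod 2) (i, c) = 1} := by
  refine isOpen_of_forall_ball dH dH_self fun z hz => ?_
  refine ⟨((3:ℝ) ^ (i + 1))⁻¹, by positivity, fun y hy => ?_⟩
  have := digits_agree (z := z) (w := y) (j := c) (i := i) hy i le_rfl
  simp only [Set.mem_setOf_eq] at hz ⊢
  rw [← this]
  exact hz

end AuxDigits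
section AuxOrbit
open Set

lemma mem_fixH_iff {g : ↥Ggrp} {m : ℕ} :
    g ∈ fixH (bSet m) ↔ ∀ k, k < m → ∀ p : ℕ × ℕ,
      (((g : Equiv.Perm (ℕ × ℕ)))⁻¹ p).2 = k + 1 ↔ p.2 = k + 1 := by
  constructor
  · intro hg k hk p
    have h1 : actGH g (bElt k) = bElt k := hg (bElt k) ⟨k, hk, rfl⟩
    have h2 := congrFun (congrArg Subtype.val h1) p
    change (if (((g : Equiv.Perm (ℕ × ℕ)))⁻¹ p).2 = k + 1 then (1:ZMod 2) else 0)
      = (if p.2 = k + 1 then (1:ZMod 2) else 0) at h2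
    constructor
    · intro h
      by_contra hc
      rw [if_pos h, if_neg hc] at h2
      exact zmod2_one_ne_zero h2
    · intro h
      by_contra hc
      rw [if_neg hc, if_pos h] at h2
      exact zmod2_one_ne_zero h2.symm
  · intro h c hc
    obtain ⟨k, hk, rfl⟩ := hc
    apply Subtype.ext
    funext p
    change (if (((g : Equiv.Perm (ℕ × ℕ)))⁻¹ p).2 = k + 1 then (1:ZMod 2) else 0)
      = (if p.2 = k + 1 then (1:ZMod 2) else 0)
    rw [if_congr (h k hk p) rfl rfl]

lemma fix_col_apply {g : ↥Ggrp} {m : ℕ} (hg : g ∈ fixH (bSet m)) {k : ℕ} (hk : k < m)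
    (p : ℕ × ℕ) : (((g : Equiv.Perm (ℕ × ℕ))) p).2 = k + 1 ↔ p.2 = k + 1 := by
  have := mem_fixH_iff.1 hg k hk (((g : Equiv.Perm (ℕ × ℕ))) p)
  rw [Equiv.Perm.inv_apply_self] at this
  exact this.symm

lemma actGH_aElt_apply (g : ↥Ggrp) (p : ℕ × ℕ) :
    (actGH g aElt : (ℕ × ℕ) → ZMod 2) p
      = if (((g : Equiv.Perm (ℕ × ℕ)))⁻¹ p).2 = 0 then 1 else 0 := rfl

lemma orbit_vanish {m : ℕ} {x : ↥Hgrp} (hx : x ∈ orbitOverH (bSet m) aElt) {k : ℕ}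
    (hk : k < m) (p : ℕ × ℕ) (hp : p.2 = k + 1) : (x : (ℕ × ℕ) → ZMod 2) p = 0 := by
  obtain ⟨g, hg, rfl⟩ := hx
  rw [actGH_aElt_apply, if_neg]
  intro h0
  have := (mem_fixH_iff.1 hg k hk p).2 hp
  omega

lemma bSet_union (n : ℕ) : bSet n ∪ bSet (n + 1) = bSet (n + 1) := by
  apply Set.Subset.antisymm
  · rintro x (⟨k, hk, rfl⟩ | hx)
    · exact ⟨k, by omega, rfl⟩
    · exact hx
  · exact Set.subset_union_right

end AuxOrbit
section AuxInsert
open Set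

/-- The element of `H` supported on the single point `c`. -/
noncomputable def singleElt (c : ℕ × ℕ) : ↥Hgrp :=
  ⟨fun p => if p = c then 1 else 0, by
    show nrmZ _ < ⊤
    have hsub : suppZ (fun p => if p = c then (1:ZMod 2) else 0) ⊆ {c} := by
      intro p hp
      by_contra hc
      have : (if p = c then (1:ZMod 2) else 0) = 1 := hp
      rw [if_neg (fun h : p = c => hc (by simp [h]))] at this
      exact zmod2_one_ne_zero this.symm
    calc nrmZ _ ≤ nrmS {c} := nrmS_mono hsub
      _ = wt c := nrmS_singleton c
      _ < ⊤ := (wt_ne_top c).lt_top⟩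

lemma singleElt_coe (c p : ℕ × ℕ) :
    (singleElt c : (ℕ × ℕ) → ZMod 2) p = if p = c then 1 else 0 := rfl

set_option maxHeartbeats 1000000 in
lemma insert_point {n : ℕ} {x : ↥Hgrp} (hx : x ∈ orbitOverH (bSet n) aElt)
    (hempty : ∀ j : ℕ, (x : (ℕ × ℕ) → ZMod 2) (j, n + 1) = 0) (i : ℕ) :
    x + singleElt (i, n + 1) ∈ orbitOverH (bSet n) aElt := by
  classical
  obtain ⟨g, hg, hga⟩ := hx
  set G : Equiv.Perm (ℕ × ℕ) := (g : Equiv.Perm (ℕ × ℕ)) with hG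
  have hxval : ∀ q, (x : (ℕ × ℕ) → ZMod 2) q = if (G⁻¹ q).2 = 0 then (1:ZMod 2) else 0 := by
    intro q
    rw [← hga]
    rfl
  set t : ℕ → ℕ × ℕ := fun k => G (k, 0) with ht
  have hxt : ∀ k, (x : (ℕ × ℕ) → ZMod 2) (t k) = 1 := by
    intro k
    rw [hxval, ht]
    simp [Equiv.Perm.inv_apply_self]
  have ht_col : ∀ k, (t k).2 ≠ n + 1 := by
    intro k hc
    have h0 := hempty (t k).1
    rw [← hc, Prod.mk.eta, hxt k] at h0
    exact zmod2_one_ne_zero h0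
  set ι : ℤ → ℕ × ℕ :=
    fun z => if z < 0 then t ((-(z+1)).toNat) else (i + z.toNat, n + 1) with hι_def
  have hι_neg : ∀ z : ℤ, z < 0 → ι z = t ((-(z+1)).toNat) := fun z hz => if_pos hz
  have hι_nonneg : ∀ z : ℤ, 0 ≤ z → ι z = (i + z.toNat, n + 1) :=
    fun z hz => if_neg (by omega)
  have hι_col : ∀ z : ℤ, z < 0 → (ι z).2 ≠ n + 1 := fun z hz => by
    rw [hι_neg z hz]; exact ht_col _
  have hι_col' : ∀ z : ℤ, 0 ≤ z → (ι z).2 = n + 1 := fun z hz => by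
    rw [hι_nonneg z hz]
  have htinj : Function.Injective t := by
    intro a b hab
    have h := G.injective hab
    exact congrArg Prod.fst h
  have hι_inj : Function.Injective ι := by
    intro z1 z2 h12
    by_cases h1 : z1 < 0 <;> by_cases h2 : z2 < 0
    · rw [hι_neg z1 h1, hι_neg z2 h2] at h12
      have := htinj h12
      omega
    · exact absurd (by rw [h12]; exact hι_col' z2 (by omega)) (hι_col z1 h1)
    · exact absurd (by rw [← h12]; exact hι_col' z1 (by omega)) (hι_col z2 h2)
    · rw [hι_nonneg z1 (by omega), hι_nonneg z2 (by omega)] at h12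
      have := congrArg Prod.fst h12
      simp only [] at this
      omega
  set σ : Equiv.Perm (ℕ × ℕ) :=
    (Equiv.addRight (1:ℤ)).extendDomain (Equiv.ofInjective ι hι_inj) with hσ
  have hσι : ∀ z : ℤ, σ (ι z) = ι (z + 1) := by
    intro z
    have h := Equiv.Perm.extendDomain_apply_image (Equiv.addRight (1:ℤ))
      (Equiv.ofInjective ι hι_inj) z
    simpa using h
  have hσ_fix : ∀ p, p ∉ Set.range ι → σ p = p := fun p hp =>
    Equiv.Perm.extendDomain_apply_not_subtype _ _ hp
  have hσ_inv : ∀ z : ℤ, σ⁻¹ (ι z) = ι (z - 1) := by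
    intro z
    have h' := hσι (z - 1)
    rw [sub_add_cancel] at h'
    rw [← h', Equiv.Perm.inv_apply_self]
  have hσ_inv_fix : ∀ p, p ∉ Set.range ι → σ⁻¹ p = p := by
    intro p hp
    conv_lhs => rw [← hσ_fix p hp]
    rw [Equiv.Perm.inv_apply_self]
  have hσG : σ ∈ Ggrp := by
    show nrmS (suppP σ) < ⊤
    have hsub : suppP σ ⊆ suppZ (x : (ℕ × ℕ) → ZMod 2) ∪ {p : ℕ × ℕ | p.2 = n + 1} := by
      intro p hp
      have hpr : p ∈ Set.range ι := by
        by_contra hc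
        exact hp (hσ_fix p hc)
      obtain ⟨z, rfl⟩ := hpr
      by_cases hz : z < 0
      · left
        rw [hι_neg z hz]
        exact hxt _
      · right
        exact hι_col' z (by omega)
    calc nrmS (suppP σ) ≤ nrmS (suppZ (x : (ℕ × ℕ) → ZMod 2) ∪ {p : ℕ × ℕ | p.2 = n + 1}) :=
          nrmS_mono hsub
      _ ≤ nrmZ (x : (ℕ × ℕ) → ZMod 2) + nrmS {p : ℕ × ℕ | p.2 = n + 1} := nrmS_union_le _ _
      _ < ⊤ := ENNReal.add_lt_top.2 ⟨x.2, nrmS_column_lt_top (n + 1)⟩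
  have hι_cols : ∀ z : ℤ, ∀ k, k < n → (ι z).2 ≠ k + 1 := by
    intro z k hk
    by_cases hz : z < 0
    · rw [hι_neg z hz]
      intro hc
      have h := (fix_col_apply hg hk (((-(z+1)).toNat), 0)).1 hc
      simp only [] at h
      omega
    · rw [hι_nonneg z (by omega)]
      simp only []
      omega
  set g' : ↥Ggrp := ⟨σ, hσG⟩ * g with hg'
  have hg'perm : (g' : Equiv.Perm (ℕ × ℕ)) = σ * G := rfl
  have hg'fix : g' ∈ fixH (bSet n) := by
    rw [mem_fixH_iff]
    intro k hk p
    have hGiff := mem_fixH_iff.1 hg k hk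
    have hstep : (σ⁻¹ p).2 = k + 1 ↔ p.2 = k + 1 := by
      by_cases hp : p ∈ Set.range ι
      · obtain ⟨z, rfl⟩ := hp
        rw [hσ_inv z]
        constructor
        · intro hc
          exact absurd hc (hι_cols (z - 1) k hk)
        · intro hc
          exact absurd hc (hι_cols z k hk)
      · rw [hσ_inv_fix p hp]
    rw [hg'perm, mul_inv_rev, Equiv.Perm.mul_apply]
    exact (hGiff (σ⁻¹ p)).trans hstep
  refine ⟨g', hg'fix, ?_⟩
  apply Subtype.ext
  funext p
  have hLHS : (actGH g' aElt : (ℕ × ℕ) → ZMod 2) p = (x : (ℕ × ℕ) → ZMod 2) (σ⁻¹ p) := by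
    rw [actGH_aElt_apply, hxval, hg'perm, mul_inv_rev, Equiv.Perm.mul_apply]
  have hRHS : ((x + singleElt (i, n + 1) : ↥Hgrp) : (ℕ × ℕ) → ZMod 2) p
      = (x : (ℕ × ℕ) → ZMod 2) p + (if p = (i, n + 1) then 1 else 0) := rfl
  show (actGH g' aElt : (ℕ × ℕ) → ZMod 2) p
      = ((x + singleElt (i, n + 1) : ↥Hgrp) : (ℕ × ℕ) → ZMod 2) p
  rw [hLHS, hRHS]
  have hι0 : ι 0 = (i, n + 1) := by
    rw [hι_nonneg 0 le_rfl]
    simp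
  by_cases hp : p ∈ Set.range ι
  · obtain ⟨z, rfl⟩ := hp
    rw [hσ_inv z]
    rcases lt_trichotomy z 0 with hz | hz | hz
    · rw [hι_neg z hz, hι_neg (z - 1) (by omega), hxt, hxt, if_neg ?_, add_zero]
      intro hc
      exact ht_col _ (congrArg Prod.snd hc)
    · subst hz
      rw [show (0:ℤ) - 1 = -1 from rfl, hι_neg (-1) (by norm_num)]
      rw [show (-((-1:ℤ)+1)).toNat = 0 from rfl, hxt, hι0, if_pos rfl]
      rw [hempty i, zero_add]
    · rw [hι_nonneg z (by omega), hι_nonneg (z - 1) (by omega), hempty, hempty, if_neg ?_, add_zero]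
      intro hc
      have := congrArg Prod.fst hc
      simp only [] at this
      omega
  · rw [hσ_inv_fix p hp, if_neg ?_, add_zero]
    intro hc
    exact hp ⟨0, by rw [hι0, hc]⟩

end AuxInsert
section Part1
open Set

set_option maxHeartbeats 1000000 in
lemma part1_nowhereDense (n : ℕ) :
    @IsNowhereDense ↥(orbitOverH (bSet n) aElt) (@instTopologicalSpaceSubtype ↥Hgrp _ tH)
      {x : ↥(orbitOverH (bSet n) aElt) | (x : ↥Hgrp) ∈ orbitOverH (bSet (n + 1)) aElt} := by
  letI : TopologicalSpace ↥Hgrp := tH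
  set O := orbitOverH (bSet n) aElt with hO
  set S := {x : ↥O | (x : ↥Hgrp) ∈ orbitOverH (bSet (n + 1)) aElt} with hSdef
  show interior (closure S) = ∅
  have hopen_digit : ∀ j : ℕ, IsOpen {w : ↥Hgrp | (w : (ℕ × ℕ) → ZMod 2) (j, n + 1) = 1} :=
    fun j => isOpen_digit_one j (n + 1)
  have hclosS : ∀ z : ↥O, z ∈ closure S →
      ∀ j : ℕ, ((z : ↥Hgrp) : (ℕ × ℕ) → ZMod 2) (j, n + 1) = 0 := by
    intro z hz j
    by_contra h0
    have h1 : ((z : ↥Hgrp) : (ℕ × ℕ) → ZMod 2) (j, n + 1) = 1 := by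
      rcases zmod2_em (((z : ↥Hgrp) : (ℕ × ℕ) → ZMod 2) (j, n + 1)) with h | h
      · exact absurd h h0
      · exact h
    have hU : IsOpen ((Subtype.val : ↥O → ↥Hgrp) ⁻¹'
        {w : ↥Hgrp | (w : (ℕ × ℕ) → ZMod 2) (j, n + 1) = 1}) :=
      (hopen_digit j).preimage continuous_subtype_val
    obtain ⟨s, hs⟩ := mem_closure_iff.1 hz _ hU h1
    have hv0 := orbit_vanish hs.2 (show n < n + 1 by omega) (j, n + 1) rfl
    have hv1 : ((s : ↥Hgrp) : (ℕ × ℕ) → ZMod 2) (j, n + 1) = 1 := hs.1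
    exact zmod2_one_ne_zero (hv1.symm.trans hv0)
  by_contra hne
  obtain ⟨x, hx⟩ := Set.nonempty_iff_ne_empty.2 hne
  have hxcl : x ∈ closure S := interior_subset hx
  have hx_empty : ∀ j, ((x : ↥Hgrp) : (ℕ × ℕ) → ZMod 2) (j, n + 1) = 0 := hclosS x hxcl
  obtain ⟨U, hUsub, hUopen, hxU⟩ := mem_interior.1 hx
  obtain ⟨V, hVopen, hVpre⟩ := isOpen_induced_iff.1 hUopen
  have hxV : (x : ↥Hgrp) ∈ V := by
    rw [← hVpre] at hxU
    exact hxU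
  have hVgen : TopologicalSpace.GenerateOpen (ballsOf dH) V := hVopen
  obtain ⟨ε, hε, hball⟩ := exists_ball_subset dH dH_triangle hVgen (x : ↥Hgrp) hxV
  obtain ⟨m, hm⟩ := exists_pow_lt_of_lt_one (half_pos hε) (show (1/3:ℝ) < 1 by norm_num)
  have hflip : 2 * (((3:ℝ) ^ (m + 1))⁻¹) < ε := by
    have h1 : ((3:ℝ) ^ (m + 1))⁻¹ ≤ (1/3:ℝ) ^ m := by
      rw [one_div, inv_pow]
      exact inv_anti₀ (by positivity) (pow_le_pow_right₀ (by norm_num) (by omega))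
    calc 2 * (((3:ℝ) ^ (m + 1))⁻¹) ≤ 2 * (1/3:ℝ) ^ m := by linarith
      _ < 2 * (ε / 2) := by linarith
      _ = ε := by ring
  set y : ↥Hgrp := (x : ↥Hgrp) + singleElt (m, n + 1) with hy
  have hyval : ∀ p : ℕ × ℕ, (y : (ℕ × ℕ) → ZMod 2) p
      = ((x : ↥Hgrp) : (ℕ × ℕ) → ZMod 2) p + (if p = (m, n + 1) then 1 else 0) := fun p => rfl
  have hyO : y ∈ O := insert_point x.2 hx_empty m
  have hyflip_ne : ((x : ↥Hgrp) : (ℕ × ℕ) → ZMod 2) (m, n + 1)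
      ≠ (y : (ℕ × ℕ) → ZMod 2) (m, n + 1) := by
    rw [hyval, if_pos rfl, hx_empty m, zero_add]
    exact fun h => zmod2_one_ne_zero h.symm
  have hagree : ∀ p, p ≠ (m, n + 1) →
      ((x : ↥Hgrp) : (ℕ × ℕ) → ZMod 2) p = (y : (ℕ × ℕ) → ZMod 2) p := by
    intro p hp
    rw [hyval, if_neg hp, add_zero]
  have hdist : dH (x : ↥Hgrp) y = 2 * (((3:ℝ) ^ (m + 1))⁻¹) :=
    dH_flip _ _ (m, n + 1) hyflip_ne hagree
  have hyV : y ∈ V := hball (by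
    show dH (x : ↥Hgrp) y < ε
    rw [hdist]
    exact hflip)
  have hymem : (⟨y, hyO⟩ : ↥O) ∈ U := by
    rw [← hVpre]
    exact hyV
  have hfin := hclosS ⟨y, hyO⟩ (hUsub hymem) m
  have hy1 : (y : (ℕ × ℕ) → ZMod 2) (m, n + 1) = 1 := by
    rw [hyval, if_pos rfl, hx_empty m, zero_add]
  exact zmod2_one_ne_zero (hy1.symm.trans hfin)

end Part1
section Part2
open Set

set_option maxHeartbeats 1000000 in
lemma part2_meagre (n : ℕ) :
    @IsMeagre ↥(fixH (bSet n)) (@instTopologicalSpaceSubtype ↥Ggrp _ tG)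
      {g : ↥(fixH (bSet n)) | actGH (g : ↥Ggrp) aElt ∈ orbitOverH (bSet (n + 1)) aElt} := by
  letI : TopologicalSpace ↥Ggrp := tG
  set F := fixH (bSet n) with hF
  set M := {g : ↥F | actGH (g : ↥Ggrp) aElt ∈ orbitOverH (bSet (n + 1)) aElt} with hM
  have hnd : IsNowhereDense M := by
    show interior (closure M) = ∅
    have hcl : ∀ z : ↥F, z ∈ closure M →
        ∀ k : ℕ, (((z : ↥Ggrp) : Equiv.Perm (ℕ × ℕ)) (k, 0)).2 ≠ n + 1 := by
      intro z hz k hc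
      set V := {h : ↥Ggrp | dG (z : ↥Ggrp) h < (wt (k, 0)).toReal} with hV
      have hVopen : IsOpen V :=
        TopologicalSpace.GenerateOpen.basic V ⟨(z : ↥Ggrp), (wt (k, 0)).toReal,
          wt_toReal_pos _, rfl⟩
      have hU : IsOpen ((Subtype.val : ↥F → ↥Ggrp) ⁻¹' V) :=
        hVopen.preimage continuous_subtype_val
      have hzU : z ∈ (Subtype.val : ↥F → ↥Ggrp) ⁻¹' V := by
        show dG (z : ↥Ggrp) (z : ↥Ggrp) < _
        rw [dG_self]
        exact wt_toReal_pos _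
      obtain ⟨s, hs⟩ := mem_closure_iff.1 hz _ hU hzU
      have heq : ((z : ↥Ggrp) : Equiv.Perm (ℕ × ℕ)) (k, 0)
          = ((s : ↥Ggrp) : Equiv.Perm (ℕ × ℕ)) (k, 0) := apply_eq_of_dG_lt hs.1
      have hv0 := orbit_vanish hs.2 (show n < n + 1 by omega)
        (((z : ↥Ggrp) : Equiv.Perm (ℕ × ℕ)) (k, 0)) hc
      have hv1 : (actGH (s : ↥Ggrp) aElt : (ℕ × ℕ) → ZMod 2)
          (((z : ↥Ggrp) : Equiv.Perm (ℕ × ℕ)) (k, 0)) = 1 := by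
        rw [actGH_aElt_apply, heq]
        simp [Equiv.Perm.inv_apply_self]
      exact zmod2_one_ne_zero (hv1.symm.trans hv0)
    by_contra hne
    obtain ⟨g₀, hg₀⟩ := Set.nonempty_iff_ne_empty.2 hne
    have hP := hcl g₀ (interior_subset hg₀)
    obtain ⟨U, hUsub, hUopen, hxU⟩ := mem_interior.1 hg₀
    obtain ⟨V, hVopen, hVpre⟩ := isOpen_induced_iff.1 hUopen
    have hxV : (g₀ : ↥Ggrp) ∈ V := by
      rw [← hVpre] at hxU
      exact hxU
    have hVgen : TopologicalSpace.GenerateOpen (ballsOf dG) V := hVopen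
    obtain ⟨ε, hε, hball⟩ := exists_ball_subset dG dG_triangle hVgen (g₀ : ↥Ggrp) hxV
    obtain ⟨k, hk⟩ := exists_pow_lt_of_lt_one (show (0:ℝ) < ε/4 by linarith)
      (show (1/3:ℝ) < 1 by norm_num)
    have hkwt : (wt (k, 0)).toReal < ε/2 := by
      rw [wt_toReal]
      have h1 : ((3:ℝ) ^ ((k, 0).1 + 1))⁻¹ ≤ (1/3:ℝ) ^ k := by
        rw [one_div, inv_pow]
        exact inv_anti₀ (by positivity) (pow_le_pow_right₀ (by norm_num) (by omega))
      calc 2 * ((3:ℝ) ^ ((k, 0).1 + 1))⁻¹ ≤ 2 * (1/3:ℝ) ^ k := by linarith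
        _ < 2 * (ε/4) := by linarith
        _ ≤ ε/2 := by linarith
    set G0 : Equiv.Perm (ℕ × ℕ) := ((g₀ : ↥Ggrp) : Equiv.Perm (ℕ × ℕ)) with hG0
    set δ := ENNReal.ofReal (ε/2) with hδ
    have hδ0 : δ ≠ 0 := by
      rw [hδ, ne_eq, ENNReal.ofReal_eq_zero, not_le]
      linarith
    have hFfin : {q : ℕ × ℕ | q ∈ suppP G0 ∧ δ ≤ wt q}.Finite := by
      by_contra hinf
      have htop := nrmS_eq_top_of_infinite_of_le hδ0 hinf (fun p hp => hp.2)
      have hle : nrmS {q : ℕ × ℕ | q ∈ suppP G0 ∧ δ ≤ wt q} ≤ nrmS (suppP G0) :=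
        nrmS_mono fun q hq => hq.1
      rw [htop] at hle
      exact absurd (g₀ : ↥Ggrp).2 (not_lt.2 hle)
    have hrow : {r : ℕ | δ ≤ wt (r, n + 1)}.Finite := by
      obtain ⟨R, hR⟩ := exists_pow_lt_of_lt_one (show (0:ℝ) < ε/8 by linarith)
        (show (1/3:ℝ) < 1 by norm_num)
      refine Set.Finite.subset (Set.finite_Iio R) ?_
      intro r hr
      simp only [Set.mem_setOf_eq] at hr
      by_contra hrR
      have hrge : R ≤ r := not_lt.mp (fun h => hrR h)
      have h2 : (wt (r, n + 1)).toReal < ε/2 := by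
        rw [wt_toReal]
        have h1 : ((3:ℝ) ^ ((r, n+1).1 + 1))⁻¹ ≤ (1/3:ℝ) ^ R := by
          rw [one_div, inv_pow]
          exact inv_anti₀ (by positivity) (pow_le_pow_right₀ (by norm_num) (by omega))
        calc 2 * ((3:ℝ) ^ ((r, n+1).1 + 1))⁻¹ ≤ 2 * (1/3:ℝ) ^ R := by linarith
          _ < 2 * (ε/8) := by linarith
          _ ≤ ε/2 := by linarith
      have h3 : δ ≤ wt (r, n + 1) := hr
      rw [hδ] at h3
      have h4 := (ENNReal.ofReal_le_iff_le_toReal (wt_ne_top _)).1 h3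
      linarith
    have hinj : Function.Injective (fun r : ℕ => G0⁻¹ (r, n + 1)) := by
      intro a b hab
      have h := G0⁻¹.injective hab
      exact congrArg Prod.fst h
    have hbadfin : {r : ℕ | δ ≤ wt (G0⁻¹ (r, n + 1))}.Finite := by
      have hsub : {r : ℕ | δ ≤ wt (G0⁻¹ (r, n + 1))}
          ⊆ ((fun r : ℕ => G0⁻¹ (r, n + 1)) ⁻¹' {q : ℕ × ℕ | q ∈ suppP G0 ∧ δ ≤ wt q})
            ∪ {r : ℕ | δ ≤ wt (r, n + 1)} := by
        intro r hr
        by_cases hfix : G0⁻¹ (r, n + 1) = (r, n + 1)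
        · right
          have hr' : δ ≤ wt (G0⁻¹ (r, n + 1)) := hr
          rw [hfix] at hr'
          exact hr'
        · left
          refine ⟨?_, hr⟩
          show G0 (G0⁻¹ (r, n + 1)) ≠ G0⁻¹ (r, n + 1)
          rw [Equiv.Perm.apply_inv_self]
          exact fun h => hfix h.symm
      exact ((hFfin.preimage hinj.injOn).union hrow).subset hsub
    obtain ⟨r, hr⟩ := hbadfin.infinite_compl.nonempty
    have hrwt : wt (G0⁻¹ (r, n + 1)) < δ := lt_of_not_ge hr
    have hqtoReal : (wt (G0⁻¹ (r, n + 1))).toReal < ε/2 := by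
      rw [hδ] at hrwt
      exact (ENNReal.lt_ofReal_iff_toReal_lt (wt_ne_top _)).1 hrwt
    set c : ℕ × ℕ := (r, n + 1) with hc_def
    set p : ℕ × ℕ := (k, 0) with hp_def
    have hgp_col : (G0 p).2 ≠ n + 1 := hP k
    have hgpc : G0 p ≠ c := fun h => hgp_col (by rw [h])
    set τ : Equiv.Perm (ℕ × ℕ) := Equiv.swap (G0 p) c with hτ
    have hτ_supp : ∀ q : ℕ × ℕ, q ≠ G0 p → q ≠ c → τ q = q := fun q h1 h2 =>
      Equiv.swap_apply_of_ne_of_ne h1 h2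
    have hτG : τ ∈ Ggrp := by
      show nrmS (suppP τ) < ⊤
      have hsub : suppP τ ⊆ {G0 p, c} := by
        intro q hq
        by_contra hqc
        simp only [Set.mem_insert_iff, Set.mem_singleton_iff, not_or] at hqc
        exact hq (hτ_supp q hqc.1 hqc.2)
      exact lt_of_le_of_lt (le_trans (nrmS_mono hsub) (nrmS_pair_le _ _))
        (ENNReal.add_lt_top.2 ⟨(wt_ne_top _).lt_top, (wt_ne_top _).lt_top⟩)
    set g' : ↥Ggrp := ⟨τ, hτG⟩ * (g₀ : ↥Ggrp) with hg'
    have hg'perm : (g' : Equiv.Perm (ℕ × ℕ)) = τ * G0 := rfl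
    have hg₀F : (g₀ : ↥Ggrp) ∈ fixH (bSet n) := g₀.2
    have hg'F : g' ∈ fixH (bSet n) := by
      rw [mem_fixH_iff]
      intro k' hk' q
      have hGiff := mem_fixH_iff.1 hg₀F k' hk'
      have hc1 : (G0 p).2 ≠ k' + 1 := by
        intro hcc
        have h := (fix_col_apply hg₀F hk' p).1 hcc
        rw [hp_def] at h
        simp only [] at h
        omega
      have hc2 : (c : ℕ × ℕ).2 ≠ k' + 1 := by
        rw [hc_def]
        show n + 1 ≠ k' + 1
        omega
      have hτcol : (τ⁻¹ q).2 = k' + 1 ↔ q.2 = k' + 1 := by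
        rw [hτ, Equiv.swap_inv]
        by_cases h1 : q = G0 p
        · rw [h1, Equiv.swap_apply_left]
          exact iff_of_false hc2 hc1
        · by_cases h2 : q = c
          · rw [h2, Equiv.swap_apply_right]
            exact iff_of_false hc1 hc2
          · rw [Equiv.swap_apply_of_ne_of_ne h1 h2]
      rw [hg'perm, mul_inv_rev, Equiv.Perm.mul_apply]
      exact (hGiff (τ⁻¹ q)).trans hτcol
    have hsupp_sub : suppP (G0⁻¹ * (τ * G0)) ⊆ {p, G0⁻¹ c} := by
      intro q hq
      rw [suppP_mul_inv] at hq
      have hq' : τ (G0 q) ≠ G0 q := by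
        intro h
        exact hq (by rw [Equiv.Perm.mul_apply] at *; exact h.symm ▸ rfl)
      by_contra hqc
      simp only [Set.mem_insert_iff, Set.mem_singleton_iff, not_or] at hqc
      apply hq'
      apply hτ_supp
      · intro h
        exact hqc.1 (G0.injective h)
      · intro h
        apply hqc.2
        rw [← h, Equiv.Perm.inv_apply_self]
    have hdist : dG (g₀ : ↥Ggrp) g' < ε := by
      have hle : nrmS (suppP ((((g₀ : ↥Ggrp) : Equiv.Perm (ℕ × ℕ)))⁻¹
          * (g' : Equiv.Perm (ℕ × ℕ)))) ≤ wt p + wt (G0⁻¹ c) := by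
        rw [hg'perm]
        exact le_trans (nrmS_mono hsupp_sub) (nrmS_pair_le _ _)
      have hfin2 : (wt p + wt (G0⁻¹ c)) ≠ ⊤ := ENNReal.add_ne_top.2 ⟨wt_ne_top _, wt_ne_top _⟩
      have h2 : dG (g₀ : ↥Ggrp) g' ≤ (wt p + wt (G0⁻¹ c)).toReal := by
        rw [dG]
        exact (ENNReal.toReal_le_toReal (nrm_dG_ne_top _ _) hfin2).2 hle
      rw [ENNReal.toReal_add (wt_ne_top _) (wt_ne_top _)] at h2
      linarith
    have hg'V : g' ∈ V := hball (by
      show dG (g₀ : ↥Ggrp) g' < ε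
      exact hdist)
    have hg'U : (⟨g', hg'F⟩ : ↥F) ∈ U := by
      rw [← hVpre]
      exact hg'V
    have hfin := hcl ⟨g', hg'F⟩ (hUsub hg'U) k
    apply hfin
    show ((g' : Equiv.Perm (ℕ × ℕ)) (k, 0)).2 = n + 1
    rw [hg'perm, Equiv.Perm.mul_apply]
    rw [show G0 (k, 0) = G0 p from rfl, hτ, Equiv.swap_apply_left]
  rw [isMeagre_iff_countable_union_isNowhereDense]
  exact ⟨{M}, fun t ht => by rw [Set.mem_singleton_iff.1 ht]; exact hnd,
    Set.countable_singleton _, Set.subset_sUnion_of_mem rfl⟩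

end Part2

/-- Let `a ∈ H` be given by `a (i,j) = 1` iff `j = 0`, and for `n < ω` let
`b_n ∈ H` be given by `b_n (i,j) = 1` iff `j = n + 1`. Then for every `n < ω`, the orbit
`o(a/{b_0,…,b_n})` is nowhere dense in the orbit `o(a/{b_0,…,b_{n-1}})` (with the subspace
topology from `(H, d_H)`), and `a` is nm-dependent on `{b_0,…,b_n}` over
`{b_0,…,b_{n-1}}`. -/
theorem statement18 (n : ℕ) :
    @IsNowhereDense ↥(orbitOverH (bSet n) aElt) (@instTopologicalSpaceSubtype ↥Hgrp _ tH)
      {x : ↥(orbitOverH (bSet n) aElt) | (x : ↥Hgrp) ∈ orbitOverH (bSet (n + 1)) aElt} ∧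
    ¬ NMIndepH aElt (bSet n) (bSet (n + 1)) := by
  refine ⟨part1_nowhereDense n, ?_⟩
  unfold NMIndepH
  rw [not_not, bSet_union n]
  exact part2_meagre n
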